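/- For any stationary probability measure ρ of a memoryless RDS, the set of pairs (ω,x) that are Lyapunov stable but not recurrently Lyapunov stable is a (P ⊗ ρ)-null set. -/

import Mathlib

open MeasureTheory ProbabilityTheory Filter Topology

/-- A (discrete-time) filtered random dynamical system over a memoryless stationary
noise space, on a metric space `X`. -/
structure MRDS (Ω X : Type*) [mΩ : MeasurableSpace Ω] [MetricSpace X]
    [mX : MeasurableSpace X] [BorelSpace X] where
  P : Measure Ω
  hprob : IsProbabilityMeasure P
  F : ℕ → MeasurableSpace Ω
  hle : ∀ t, F t ≤ mΩ
  hmono : Monotone F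
  θ : ℕ → Ω → Ω
  hθ0 : θ 0 = id
  hθadd : ∀ s t, θ (s + t) = θ s ∘ θ t
  hθmeas : ∀ s t, @Measurable Ω Ω (F (s + t)) (F s) (θ t)
  hθpres : ∀ t, MeasurePreserving (θ t) P P
  memless : ∀ s, Indep (F s) ((⨆ t, F t).comap (θ s)) P
  φ : ℕ → Ω → X → X
  hφcont : ∀ t ω, Continuous (φ t ω)
  hφmeas : ∀ t, @Measurable (Ω × X) X ((F t).prod mX) mX (fun p => φ t p.1 p.2)
  hφ0 : ∀ ω, φ 0 ω = id
  hφcocycle : ∀ s t ω, φ (s + t) ω = φ t (θ s ω) ∘ φ s ω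

namespace MRDS

variable {Ω X : Type*} [MeasurableSpace Ω] [MetricSpace X]
  [MeasurableSpace X] [BorelSpace X]

/-- The one-point transition probabilities `φ_x^t`. -/
noncomputable def law (R : MRDS Ω X) (x : X) (t : ℕ) : Measure X :=
  R.P.map (fun ω => R.φ t ω x)

/-- A closed set that is forward-invariant for the one-point transition probabilities. -/
def FwdInv (R : MRDS Ω X) (K : Set X) : Prop :=
  IsClosed K ∧ ∀ x ∈ K, ∀ t, R.law x t K = 1

/-- A minimal set: non-empty, closed, forward-invariant, with no proper non-empty closed
forward-invariant subsets. -/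
def Minimal (R : MRDS Ω X) (K : Set X) : Prop :=
  K.Nonempty ∧ R.FwdInv K ∧ ∀ K' ⊆ K, R.FwdInv K' → K' = K ∨ K' = ∅

/-- `A` contracts under the noise realisation `ω`. -/
def contracts (R : MRDS Ω X) (ω : Ω) (A : Set X) : Prop :=
  Tendsto (fun t => EMetric.diam (R.φ t ω '' A)) atTop (𝓝 0)

/-- `(ω, x)` is an asymptotically stable pair. -/
def stablePair (R : MRDS Ω X) (ω : Ω) (x : X) : Prop :=
  ∃ U ∈ 𝓝 x, R.contracts ω U

/-- The set of asymptotically stable pairs. -/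
def O (R : MRDS Ω X) : Set (Ω × X) := {p | R.stablePair p.1 p.2}

/-- The set of noise realisations under which `U` contracts. -/
def EU (R : MRDS Ω X) (U : Set X) : Set Ω := {ω | R.contracts ω U}

/-- `x` is potentially stable. -/
def potStable (R : MRDS Ω X) (x : X) : Prop := 0 < R.P {ω | R.stablePair ω x}

/-- `x` is almost surely stable. -/
def asStable (R : MRDS Ω X) (x : X) : Prop := R.P {ω | R.stablePair ω x} = 1

/-- `φ` is globally synchronising. -/
def synchronising (R : MRDS Ω X) : Prop :=
  ∀ x y : X,
    R.P {ω | Tendsto (fun t => dist (R.φ t ω x) (R.φ t ω y)) atTop (𝓝 0)} = 1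

/-- `φ` is stably synchronising. -/
def stablySynchronising (R : MRDS Ω X) : Prop :=
  R.synchronising ∧ ∀ x : X, R.asStable x

/-- `ρ` is a stationary measure for the one-point transition probabilities. -/
def stationary (R : MRDS Ω X) (ρ : Measure X) : Prop :=
  ∀ t, ∀ A : Set X, MeasurableSet A → ∫⁻ x, R.law x t A ∂ρ = ρ A

end MRDS

/-- `(ω,x)` is `(ε,δ)`-contained. -/
def MRDS.contained {Ω X : Type*} [MeasurableSpace Ω] [MetricSpace X]
    [MeasurableSpace X] [BorelSpace X] (R : MRDS Ω X) (ε δ : ℝ) (ω : Ω) (x : X) : Prop :=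
  ∀ y : X, dist x y ≤ δ → ∀ t : ℕ, dist (R.φ t ω x) (R.φ t ω y) ≤ ε

/-- `(ω,x)` is Lyapunov stable. -/
def MRDS.lyapStable {Ω X : Type*} [MeasurableSpace Ω] [MetricSpace X]
    [MeasurableSpace X] [BorelSpace X] (R : MRDS Ω X) (ω : Ω) (x : X) : Prop :=
  ∀ ε > (0 : ℝ), ∃ δ, 0 < δ ∧ δ ≤ ε ∧ R.contained ε δ ω x

/-- `(ω,x)` is recurrently Lyapunov stable: for each `ε` there is `δ` such that the set of
times `t` at which `Θ^t(ω,x) = (θ^t ω, φ(t,ω)x)` is `(ε,δ)`-contained is unbounded. -/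
def MRDS.recLyapStable {Ω X : Type*} [MeasurableSpace Ω] [MetricSpace X]
    [MeasurableSpace X] [BorelSpace X] (R : MRDS Ω X) (ω : Ω) (x : X) : Prop :=
  ∀ ε > (0 : ℝ), ∃ δ, 0 < δ ∧ δ ≤ ε ∧
    ∀ N : ℕ, ∃ t ≥ N, R.contained ε δ (R.θ t ω) (R.φ t ω x)

section Aux

namespace MRDS

variable {Ω X : Type*} [mΩ : MeasurableSpace Ω] [MetricSpace X]
  [mX : MeasurableSpace X] [BorelSpace X] (R : MRDS Ω X)

/-- The σ-algebra generated by the whole filtration. -/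
def mF : MeasurableSpace Ω := ⨆ t, R.F t

lemma mF_le : R.mF ≤ mΩ := iSup_le R.hle

/-- A type copy of `Ω` carrying the σ-algebra `⨆ t, F t`. -/
def Core (_R : MRDS Ω X) : Type _ := Ω

instance : MeasurableSpace R.Core := R.mF

/-- The shift on the core. -/
def θc (t : ℕ) : R.Core → R.Core := R.θ t

lemma theta_core_meas (t : ℕ) : Measurable (R.θc t) := by
  rw [measurable_iff_le_map]
  show (⨆ s, R.F s) ≤ _
  refine iSup_le fun s => ?_
  exact Measurable.le_map ((R.hθmeas s t).mono (le_iSup R.F (s + t)) le_rfl)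

lemma prod_core_le : (R.mF.prod mX) ≤ (mΩ.prod mX) := by
  refine sup_le ?_ ?_
  · exact le_trans (MeasurableSpace.comap_mono R.mF_le) le_sup_left
  · exact le_sup_right

/-- The cocycle on the core. -/
def φc (t : ℕ) (p : R.Core × X) : X := R.φ t p.1 p.2

lemma phi_core_meas (t : ℕ) : Measurable (R.φc t) := by
  refine (R.hφmeas t).mono ?_ le_rfl
  refine sup_le ?_ ?_
  · exact le_trans (MeasurableSpace.comap_mono (le_iSup R.F t)) le_sup_left
  · exact le_sup_right

/-- The skew product map at time 1. -/
def T : R.Core × X → R.Core × X := fun p => (R.θc 1 p.1, R.φc 1 p)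

lemma T_meas : Measurable R.T :=
  ((R.theta_core_meas 1).comp measurable_fst).prodMk (R.phi_core_meas 1)

lemma T_iter (n : ℕ) (p : R.Core × X) :
    R.T^[n] p = (R.θ n p.1, R.φ n p.1 p.2) := by
  induction n with
  | zero => exact Prod.ext (show p.1 = R.θ 0 p.1 by rw [R.hθ0]; rfl) (show p.2 = R.φ 0 p.1 p.2 from (congrFun (R.hφ0 p.1) p.2).symm)
  | succ n ih =>
    rw [Function.iterate_succ_apply', ih]
    show (R.θ 1 (R.θ n p.1), R.φ 1 (R.θ n p.1) (R.φ n p.1 p.2)) = _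
    have h1 : R.θ (n + 1) p.1 = R.θ 1 (R.θ n p.1) := by
      have := R.hθadd 1 n
      rw [add_comm]
      exact congrFun this p.1
    have h2 : R.φ (n + 1) p.1 p.2 = R.φ 1 (R.θ n p.1) (R.φ n p.1 p.2) := by
      have := R.hφcocycle n 1 p.1
      exact congrFun this p.2
    rw [h1, h2]

/-- The trimmed measure on the core. -/
noncomputable def Pc : Measure R.Core := R.P.trim R.mF_le

instance : IsProbabilityMeasure R.Pc := by
  constructor
  have := R.hprob
  show R.P.trim R.mF_le Set.univ = 1
  rw [trim_measurableSet_eq R.mF_le (MeasurableSet.univ : MeasurableSet[R.mF] _)]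
  exact measure_univ

lemma Pc_eq {A : Set Ω} (hA : MeasurableSet[R.mF] A) : R.Pc A = R.P A :=
  trim_measurableSet_eq R.mF_le hA

lemma preserving (ρ : Measure X) [IsProbabilityMeasure ρ] (hstat : R.stationary ρ) :
    MeasurePreserving R.T (R.Pc.prod ρ) (R.Pc.prod ρ) := by
  have hPprob := R.hprob
  refine ⟨R.T_meas, ?_⟩
  refine (Measure.prod_eq (μ := R.Pc) (ν := ρ) fun A B hA hB => ?_).symm
  -- preimage of the rectangle
  rw [Measure.map_apply R.T_meas (hA.prod hB)]
  have hA' : MeasurableSet[R.mF] A := hA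
  have hpreA : MeasurableSet[R.mF] (R.θ 1 ⁻¹' A) := R.theta_core_meas 1 hA
  -- the section function
  set g : Ω → ENNReal := fun ω => ρ ((fun x => R.φ 1 ω x) ⁻¹' B) with hg_def
  set f : Ω → ENNReal := (R.θ 1 ⁻¹' A).indicator 1 with hf_def
  have hSm : MeasurableSet[(R.F 1).prod mX] ((fun p : Ω × X => R.φ 1 p.1 p.2) ⁻¹' B) :=
    R.hφmeas 1 hB
  have hgmeas : Measurable[R.F 1] g := by
    have := @measurable_measure_prodMk_left Ω X (R.F 1) mX ρ _ _ hSm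
    exact this
  have hfmeas : Measurable[R.mF.comap (R.θ 1)] f := by
    refine Measurable.indicator ?_ (MeasurableSpace.measurableSet_comap.2 ⟨A, hA', rfl⟩)
    exact measurable_const
  have hTpre : R.T ⁻¹' (A ×ˢ B) = {p : R.Core × X | R.θ 1 p.1 ∈ A ∧ R.φ 1 p.1 p.2 ∈ B} := rfl
  have hsec : ∀ ω : R.Core, ρ (Prod.mk ω ⁻¹' (R.T ⁻¹' (A ×ˢ B))) = f ω * g ω := by
    intro ω
    by_cases h : R.θ 1 ω ∈ A
    · have h1 : Prod.mk ω ⁻¹' (R.T ⁻¹' (A ×ˢ B)) = (fun x => R.φ 1 ω x) ⁻¹' B := by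
        ext x; simp [T, θc, φc, Set.mem_preimage, h]; exact fun _ => h
      have h2 : f ω = 1 := by
        rw [hf_def]; exact Set.indicator_of_mem (show ω ∈ R.θ 1 ⁻¹' A from h) 1
      rw [h1, h2, one_mul]
    · have h1 : Prod.mk ω ⁻¹' (R.T ⁻¹' (A ×ˢ B)) = ∅ := by
        ext x; simp [T, θc, φc, Set.mem_preimage, h]; exact fun h' => absurd h' h
      have h2 : f ω = 0 := by
        rw [hf_def]; exact Set.indicator_of_notMem (show ω ∉ R.θ 1 ⁻¹' A from h) 1
      rw [h1, h2, zero_mul, measure_empty]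
  rw [Measure.prod_apply (R.T_meas (hA.prod hB))]
  calc ∫⁻ ω, ρ (Prod.mk ω ⁻¹' (R.T ⁻¹' (A ×ˢ B))) ∂ R.Pc
      = ∫⁻ ω, f ω * g ω ∂ R.Pc := by
        refine lintegral_congr fun ω => hsec ω
    _ = ∫⁻ ω, f ω * g ω ∂ R.P := by
        refine lintegral_trim R.mF_le ?_
        refine Measurable.mul ?_ ?_
        · refine Measurable.indicator ?_ hpreA
          exact measurable_const
        · exact hgmeas.mono (le_iSup R.F 1) le_rfl
    _ = (∫⁻ ω, f ω ∂ R.P) * ∫⁻ ω, g ω ∂ R.P := by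
        refine lintegral_mul_eq_lintegral_mul_lintegral_of_independent_measurableSpace
          (Mf := R.mF.comap (R.θ 1)) (Mg := R.F 1) ?_ (R.hle 1) ((R.memless 1).symm)
          hfmeas hgmeas
        calc R.mF.comap (R.θ 1) ≤ mΩ.comap (R.θ 1) := MeasurableSpace.comap_mono R.mF_le
          _ ≤ mΩ := (R.hθpres 1).measurable.comap_le
    _ = R.Pc A * ρ B := by
        congr 1
        · rw [hf_def, lintegral_indicator_one (R.mF_le _ hpreA)]
          rw [(R.hθpres 1).measure_preimage (R.mF_le _ hA').nullMeasurableSet]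
          exact (R.Pc_eq hA').symm
        · -- Tonelli + stationarity
          have hSm' : MeasurableSet ((fun p : Ω × X => R.φ 1 p.1 p.2) ⁻¹' B) := by
            refine ((R.hφmeas 1).mono ?_ le_rfl) hB
            refine sup_le ?_ ?_
            · exact le_trans (MeasurableSpace.comap_mono (R.hle 1)) le_sup_left
            · exact le_sup_right
          have h1 : ∫⁻ ω, g ω ∂ R.P
              = (R.P.prod ρ) ((fun p : Ω × X => R.φ 1 p.1 p.2) ⁻¹' B) :=
            (Measure.prod_apply hSm').symm
          rw [h1, Measure.prod_apply_symm hSm']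
          have h2 : ∀ x : X, R.P ((fun ω => (ω, x)) ⁻¹' ((fun p : Ω × X => R.φ 1 p.1 p.2) ⁻¹' B))
              = R.law x 1 B := by
            intro x
            rw [law, Measure.map_apply _ hB]
            · rfl
            · have hmeas1 : @Measurable (Ω × X) X (mΩ.prod mX) mX
                  (fun p => R.φ 1 p.1 p.2) := by
                refine (R.hφmeas 1).mono ?_ le_rfl
                refine sup_le ?_ ?_
                · exact le_trans (MeasurableSpace.comap_mono (R.hle 1)) le_sup_left
                · exact le_sup_right
              exact hmeas1.comp (measurable_id.prodMk measurable_const)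
          calc ∫⁻ x, R.P ((fun ω => (ω, x)) ⁻¹' _) ∂ρ = ∫⁻ x, R.law x 1 B ∂ρ := by
                exact lintegral_congr h2
            _ = ρ B := hstat 1 B hB

/-- A countable version of `(ε,δ)`-containment using a dense sequence. -/
def cnt' (u : ℕ → X) (ε δ : ℝ) (ω : Ω) (x : X) : Prop :=
  ∀ i t, dist x (u i) < δ → dist (R.φ t ω x) (R.φ t ω (u i)) ≤ ε

lemma cnt'_meas [SecondCountableTopology X] (u : ℕ → X) (ε δ : ℝ) :
    MeasurableSet {p : R.Core × X | R.cnt' u ε δ p.1 p.2} := by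
  have : {p : R.Core × X | R.cnt' u ε δ p.1 p.2}
      = ⋂ i, ⋂ t, {p : R.Core × X |
          dist p.2 (u i) < δ → dist (R.φ t p.1 p.2) (R.φ t p.1 (u i)) ≤ ε} := by
    ext p
    simp only [Set.mem_iInter, Set.mem_setOf_eq, cnt']
  rw [this]
  refine MeasurableSet.iInter fun i => MeasurableSet.iInter fun t => ?_
  have h1 : MeasurableSet {p : R.Core × X | ¬ dist p.2 (u i) < δ} := by
    have he : {p : R.Core × X | ¬ dist p.2 (u i) < δ}
        = (fun p : R.Core × X => dist p.2 (u i)) ⁻¹' Set.Ici δ := by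
      ext p; simp [not_lt]
    rw [he]
    exact (Measurable.dist
      (measurable_snd : Measurable (Prod.snd : R.Core × X → X)) measurable_const)
      measurableSet_Ici
  have h2 : MeasurableSet {p : R.Core × X | dist (R.φ t p.1 p.2) (R.φ t p.1 (u i)) ≤ ε} := by
    have hf : Measurable (fun p : R.Core × X => R.φ t p.1 p.2) := R.phi_core_meas t
    have hg : Measurable (fun p : R.Core × X => R.φ t p.1 (u i)) :=
      (R.phi_core_meas t).comp
        ((measurable_fst : Measurable (Prod.fst : R.Core × X → R.Core)).prodMk
          measurable_const)
    exact measurableSet_le (hf.dist hg) measurable_const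
  have : {p : R.Core × X |
      dist p.2 (u i) < δ → dist (R.φ t p.1 p.2) (R.φ t p.1 (u i)) ≤ ε}
      = {p : R.Core × X | ¬ dist p.2 (u i) < δ}
        ∪ {p : R.Core × X | dist (R.φ t p.1 p.2) (R.φ t p.1 (u i)) ≤ ε} := by
    ext p; simp only [Set.mem_setOf_eq, Set.mem_union]; tauto
  rw [this]
  exact h1.union h2

lemma contained_of_cnt' {u : ℕ → X} (hu : DenseRange u) {ε δ δ' : ℝ} (hδ : δ' < δ)
    {ω : Ω} {x : X} (h : R.cnt' u ε δ ω x) : R.contained ε δ' ω x := by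
  intro y hy t
  have hS : IsClosed {z : X | ∀ s : ℕ, dist (R.φ s ω x) (R.φ s ω z) ≤ ε} := by
    have he : {z : X | ∀ s : ℕ, dist (R.φ s ω x) (R.φ s ω z) ≤ ε}
        = ⋂ s : ℕ, {z : X | dist (R.φ s ω x) (R.φ s ω z) ≤ ε} := by
      ext z; simp
    rw [he]
    exact isClosed_iInter fun s =>
      isClosed_le (continuous_const.dist (R.hφcont s ω)) continuous_const
  have hball : y ∈ Metric.ball x δ := by
    rw [Metric.mem_ball, dist_comm]
    exact lt_of_le_of_lt hy hδ
  have hsub : Metric.ball x δ ∩ Set.range u ⊆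
      {z : X | ∀ s : ℕ, dist (R.φ s ω x) (R.φ s ω z) ≤ ε} := by
    rintro z ⟨hz, ⟨i, rfl⟩⟩ s
    exact h i s (by rw [Metric.mem_ball, dist_comm] at hz; exact hz)
  have hmem : y ∈ closure (Metric.ball x δ ∩ Set.range u) :=
    hu.open_subset_closure_inter Metric.isOpen_ball hball
  have : y ∈ closure {z : X | ∀ s : ℕ, dist (R.φ s ω x) (R.φ s ω z) ≤ ε} :=
    closure_mono hsub hmem
  exact (hS.closure_subset this) t

lemma null_transfer (ρ : Measure X) [IsProbabilityMeasure ρ] {N : Set (R.Core × X)}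
    (hN : MeasurableSet N) (h0 : (R.Pc.prod ρ) N = 0) : (R.P.prod ρ) N = 0 := by
  have hPprob := R.hprob
  have key : (R.P.prod ρ).trim R.prod_core_le = R.Pc.prod ρ := by
    refine (Measure.prod_eq (μ := R.Pc) (ν := ρ) fun A B hA hB => ?_).symm
    refine ((trim_measurableSet_eq R.prod_core_le
        (show MeasurableSet[R.mF.prod mX] (A ×ˢ B) from hA.prod hB))).trans ?_
    exact (Measure.prod_prod (μ := R.P) (ν := ρ) A B).trans (by rw [R.Pc_eq hA])
  have : (R.P.prod ρ) N = ((R.P.prod ρ).trim R.prod_core_le) N :=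
    (trim_measurableSet_eq R.prod_core_le hN).symm
  rw [this, key]
  exact h0

end MRDS

end Aux

/-- Proposition A8: for any stationary probability measure `ρ` of a memoryless RDS, the
set of pairs that are Lyapunov stable but not recurrently Lyapunov stable is
`(P ⊗ ρ)`-null. -/
theorem stmt19 {Ω X : Type*} [MeasurableSpace Ω] [MetricSpace X] [CompactSpace X]
    [MeasurableSpace X] [BorelSpace X] (R : MRDS Ω X)
    (ρ : Measure X) (hρ : IsProbabilityMeasure ρ) (hstat : R.stationary ρ) :
    (R.P.prod ρ) {p : Ω × X | R.lyapStable p.1 p.2 ∧ ¬ R.recLyapStable p.1 p.2} = 0 := by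
  haveI := hρ
  haveI := R.hprob
  cases isEmpty_or_nonempty X with
  | inl hX =>
    exfalso
    have h1 : ρ Set.univ = 1 := measure_univ
    rw [Set.univ_eq_empty_iff.2 hX, measure_empty] at h1
    exact zero_ne_one h1
  | inr hX =>
  have hu : DenseRange (TopologicalSpace.denseSeq X) :=
    TopologicalSpace.denseRange_denseSeq X
  set u : ℕ → X := TopologicalSpace.denseSeq X
  have hpres := R.preserving ρ hstat
  have hcons : Conservative R.T (R.Pc.prod ρ) := hpres.conservative
  have hae : ∀ᵐ p ∂(R.Pc.prod ρ), ∀ k j : ℕ,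
      p ∈ {q : R.Core × X | R.cnt' u (1/((k:ℝ)+1)) (1/((j:ℝ)+1)) q.1 q.2} →
      ∃ᶠ n in atTop,
        R.T^[n] p ∈ {q : R.Core × X | R.cnt' u (1/((k:ℝ)+1)) (1/((j:ℝ)+1)) q.1 q.2} := by
    rw [MeasureTheory.ae_all_iff]
    intro k
    rw [MeasureTheory.ae_all_iff]
    intro j
    exact hcons.ae_mem_imp_frequently_image_mem (R.cnt'_meas u _ _).nullMeasurableSet
  rw [MeasureTheory.ae_iff] at hae
  obtain ⟨N, hBN, hNmeas, hN0⟩ := MeasureTheory.exists_measurable_superset_of_null hae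
  refine measure_mono_null (fun p hp => hBN ?_) (R.null_transfer ρ hNmeas hN0)
  simp only [Set.mem_setOf_eq] at hp ⊢
  intro hgood
  refine hp.2 ?_
  intro ε hε
  obtain ⟨k, hk⟩ := exists_nat_one_div_lt hε
  obtain ⟨δ0, hδ0pos, hδ0le, hcont⟩ := hp.1 (1/((k:ℝ)+1)) (by positivity)
  obtain ⟨j, hj⟩ := exists_nat_one_div_lt hδ0pos
  have hmem : R.cnt' u (1/((k:ℝ)+1)) (1/((j:ℝ)+1)) p.1 p.2 := by
    intro i t hdist
    exact hcont (u i) (le_of_lt (lt_trans hdist hj)) t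
  have hfreq := hgood k j hmem
  have hjpos : (0:ℝ) < 1/((j:ℝ)+1) := by positivity
  refine ⟨(1/((j:ℝ)+1))/2, by positivity, ?_, ?_⟩
  · have := half_lt_self hjpos
    linarith
  · intro N0
    obtain ⟨t, ht, hmem'⟩ := Filter.frequently_atTop.1 hfreq N0
    refine ⟨t, ht, ?_⟩
    rw [R.T_iter t p] at hmem'
    have hc := R.contained_of_cnt' hu (half_lt_self hjpos) hmem'
    exact fun y hy s => le_trans (hc y hy s) (le_of_lt hk)
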